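/- Let A be a unital complex Banach algebra. Then the Jacobson radical of A equals the set of all x ∈ A such that the spectral radius ρ(a x) = 0 for every invertible element a of A. -/

import Mathlib

/-- For `x` in the Jacobson radical, `y * x + 1` is a unit for every `y`. -/
lemma isUnit_mul_add_one_of_mem_jacobson_bot {A : Type*} [Ring A] {x : A}
    (hx : x ∈ Ideal.jacobson (⊥ : Ideal A)) (y : A) : IsUnit (y * x + 1) := by
  have H := Ideal.mem_jacobson_iff.mp hx
  obtain ⟨c, hc⟩ := H y
  rw [Ideal.mem_bot, sub_eq_zero] at hc
  -- hc : c * y * x + c = 1, i.e. c * (y * x + 1) = 1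
  have hc' : c * (y * x + 1) = 1 := by rw [mul_add, mul_one, ← mul_assoc]; exact hc
  -- c = 1 - c * y * x = (-(c*y)) * x + 1, so c also has a left inverse
  obtain ⟨d, hd⟩ := H (-(c * y))
  rw [Ideal.mem_bot, sub_eq_zero] at hd
  have hd' : d * (-(c * y) * x + 1) = 1 := by rw [mul_add, mul_one, ← mul_assoc]; exact hd
  have hc2 : c * (y * x) + c = 1 := by rw [← mul_assoc]; exact hc
  have hcform : -(c * y) * x + 1 = c := by
    rw [neg_mul, mul_assoc, ← hc2, neg_add_cancel_left]
  rw [hcform] at hd'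
  -- d * c = 1 and c * (y*x+1) = 1 ⇒ y*x+1 is a unit with inverse c
  have hde : d = y * x + 1 := by
    calc d = d * (c * (y * x + 1)) := by rw [hc', mul_one]
      _ = d * c * (y * x + 1) := by rw [mul_assoc]
      _ = y * x + 1 := by rw [hd', one_mul]
  refine ⟨⟨y * x + 1, c, ?_, hc'⟩, rfl⟩
  rw [← hde]; exact hd'

/-- An element with spectral radius zero has `1 + b` a unit. -/
lemma isUnit_one_add_of_spectralRadius_eq_zero {A : Type*} [NormedRing A] [NormedAlgebra ℂ A]
    {b : A} (h : spectralRadius ℂ b = 0) : IsUnit (1 + b) := by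
  have hmem : (-1 : ℂ) ∈ resolventSet ℂ b := by
    apply spectrum.mem_resolventSet_of_spectralRadius_lt
    rw [h]
    simp
  have h1 : IsUnit (algebraMap ℂ A (-1) - b) := hmem
  rw [map_neg, map_one] at h1
  have h2 := h1.neg
  rwa [neg_sub, sub_neg_eq_add, add_comm] at h2

/-- In a unital complex Banach algebra, the Jacobson radical coincides with the set of
elements `x` such that `ρ(a * x) = 0` for every invertible `a`. -/
theorem jacobson_radical_eq_spectralRadius_zero_on_units
    {A : Type*} [NormedRing A] [NormedAlgebra ℂ A] [CompleteSpace A] :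
    ((Ideal.jacobson (⊥ : Ideal A) : Ideal A) : Set A)
      = {x : A | ∀ a : Aˣ, spectralRadius ℂ ((a : A) * x) = 0} := by
  ext x
  simp only [SetLike.mem_coe, Set.mem_setOf_eq]
  constructor
  · -- forward: x in the radical ⇒ every a*x has spectral radius 0
    intro hx a
    have hax : (a : A) * x ∈ Ideal.jacobson (⊥ : Ideal A) :=
      Ideal.mul_mem_left _ _ hx
    -- spectrum of a*x is contained in {0}
    have hspec : spectrum ℂ ((a : A) * x) ⊆ {0} := by
      intro z hz
      by_contra hz0
      simp only [Set.mem_singleton_iff] at hz0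
      apply spectrum.mem_iff.mp hz
      have h1 : IsUnit (algebraMap ℂ A (-z⁻¹) * ((a : A) * x) + 1) :=
        isUnit_mul_add_one_of_mem_jacobson_bot hax _
      have h2 : IsUnit (algebraMap ℂ A z) :=
        (isUnit_iff_ne_zero.mpr hz0).map (algebraMap ℂ A)
      have h3 := h2.mul h1
      have key : algebraMap ℂ A z * (algebraMap ℂ A (-z⁻¹) * ((a : A) * x) + 1)
          = algebraMap ℂ A z - (a : A) * x := by
        rw [mul_add, mul_one, ← mul_assoc, ← map_mul]
        rw [show z * -z⁻¹ = -1 by field_simp]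
        rw [map_neg, map_one, neg_one_mul]
        abel
      rwa [key] at h3
    -- hence spectral radius is 0
    refine le_antisymm ?_ zero_le
    rw [spectralRadius]
    refine iSup₂_le fun z hz => ?_
    have hz0 := hspec hz
    simp only [Set.mem_singleton_iff] at hz0
    simp [hz0]
  · -- reverse: ρ(a*x) = 0 for all units a ⇒ x ∈ radical
    intro hx
    rw [Ideal.mem_jacobson_iff]
    intro y
    -- it suffices to show y * x + 1 is a unit
    suffices h : IsUnit (y * x + 1) by
      obtain ⟨u, hu⟩ := h
      refine ⟨(u⁻¹ : Aˣ), ?_⟩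
      rw [Ideal.mem_bot, sub_eq_zero, mul_assoc]
      have h1 : ((u⁻¹ : Aˣ) : A) * (y * x + 1) = 1 := by
        rw [← hu, ← Units.val_mul, inv_mul_cancel, Units.val_one]
      rw [mul_add, mul_one] at h1
      rw [← mul_assoc] at h1 ⊢
      exact h1
    rw [add_comm]
    -- need : IsUnit (1 + y * x)
    -- choose μ with ‖μ‖ large so that μ•1 - y is a unit and μ ≠ 0
    set μ : ℂ := ((‖y‖ * ‖(1 : A)‖ + 1 : ℝ) : ℂ) with hμ
    have h0 : (0:ℝ) ≤ ‖y‖ * ‖(1 : A)‖ := mul_nonneg (norm_nonneg _) (norm_nonneg _)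
    have hμnorm : ‖y‖ * ‖(1 : A)‖ < ‖μ‖ := by
      rw [hμ, Complex.norm_real, Real.norm_eq_abs, abs_of_nonneg (by linarith)]
      linarith
    have hμ0 : μ ≠ 0 := by
      intro h
      rw [h] at hμnorm
      simp only [norm_zero] at hμnorm
      linarith
    have hres : μ ∈ resolventSet ℂ y := spectrum.mem_resolventSet_of_norm_lt_mul hμnorm
    have hunit : IsUnit (algebraMap ℂ A μ - y) := hres
    -- u := y - μ•1 is a unit, y = u + μ•1
    have hu' : IsUnit (y - algebraMap ℂ A μ) := by
      have := hunit.neg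
      rwa [neg_sub] at this
    obtain ⟨u, huv⟩ := hu'
    -- 1 + u*x is a unit by the hypothesis
    have h1 : IsUnit (1 + (u : A) * x) :=
      isUnit_one_add_of_spectralRadius_eq_zero (hx u)
    obtain ⟨w, hw⟩ := h1
    have hμunit : IsUnit (algebraMap ℂ A μ) :=
      (isUnit_iff_ne_zero.mpr hμ0).map (algebraMap ℂ A)
    obtain ⟨m, hm⟩ := hμunit
    set v : Aˣ := w⁻¹ * m with hv
    have h2 : IsUnit (1 + (v : A) * x) :=
      isUnit_one_add_of_spectralRadius_eq_zero (hx v)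
    have hwv : (w : A) * (v : A) = algebraMap ℂ A μ := by
      rw [hv]
      push_cast
      rw [← mul_assoc, ← Units.val_mul, mul_inv_cancel, Units.val_one, one_mul, hm]
    have key : (w : A) * (1 + (v : A) * x) = 1 + y * x := by
      rw [mul_add, mul_one, ← mul_assoc, hwv, hw, huv]
      noncomm_ring
    rw [← key]
    exact w.isUnit.mul h2
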